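/- Define A_n(x) for m ≥ 2 as the rational functions satisfying: A_{-1}(x) = 1 and the recurrence (writing n+1 = m·n₁ + n₀ with 0 < n₀ ≤ m): A_n(x) = A_{n+1}(x) if 2n₀ = m-1; A_n(x) = A_{n+1}(x)(1 - (1-δ_{m,2})x) if n₀ = m-1 or 2n₀ = m-2; A_n(x) = A_{n+1}(x) - (1-δ_{m,2}) x² A_{n+2}(x) if 2n₀ = m; A_n(x) = (1-x) A_{n+1}(x) - (1-δ_{m,2}) x² A_{n+2}(x) otherwise. Define a_n(x) by a_0 = a_1 = 1, a_n = a_{n-1} - x a_{n-2} (n odd), a_n = (1+x) a_{n-1} - x a_{n-2} (n even). Then for s ≥ 0 and 0 ≤ r ≤ m-1: A_{ms+r}(x) = a_{2m-2r-1}(x) / (a_m(x) a_{m+1}(x))^{s+1} if ⌊m/2⌋ ≤ r ≤ m-1, and A_{ms+r}(x) = a_m(x) a_{m-2r-1}(x) / (a_m(x) a_{m+1}(x))^{s+1} if 0 ≤ r ≤ ⌊m/2⌋ - 1. -/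

import Mathlib

open Finset

/-- The polynomials `a_n(x)`: `a₀ = a₁ = 1`, and for `n ≥ 2`,
`a_n = a_{n-1} - x a_{n-2}` if `n` is odd, `a_n = (1+x) a_{n-1} - x a_{n-2}` if `n` is even,
viewed inside the field of rational functions `ℚ(x)` with `x = RatFunc.X`. -/
noncomputable def aFn : ℕ → RatFunc ℚ
  | 0 => 1
  | 1 => 1
  | (n + 2) =>
    if (n + 2) % 2 = 1 then aFn (n + 1) - RatFunc.X * aFn n
    else (1 + RatFunc.X) * aFn (n + 1) - RatFunc.X * aFn n

/-- Polynomial avatar of `aFn`. -/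
noncomputable def aP : ℕ → Polynomial ℚ
  | 0 => 1
  | 1 => 1
  | (n + 2) =>
    if (n + 2) % 2 = 1 then aP (n + 1) - Polynomial.X * aP n
    else (1 + Polynomial.X) * aP (n + 1) - Polynomial.X * aP n

lemma aFn_eq_aP (n : ℕ) : aFn n = algebraMap (Polynomial ℚ) (RatFunc ℚ) (aP n) := by
  induction n using Nat.strong_induction_on with
  | _ n ih =>
    match n with
    | 0 => simp [aFn, aP]
    | 1 => simp [aFn, aP]
    | (n+2) =>
      rw [aFn, aP, ih (n+1) (by omega), ih n (by omega)]
      split_ifs <;> simp [RatFunc.algebraMap_X]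

lemma aP_eval0 (n : ℕ) : (aP n).eval 0 = 1 := by
  induction n using Nat.strong_induction_on with
  | _ n ih =>
    match n with
    | 0 => simp [aP]
    | 1 => simp [aP]
    | (n+2) =>
      rw [aP]
      split_ifs <;> simp [ih (n+1) (by omega), ih n (by omega)]

lemma aFn_ne_zero (n : ℕ) : aFn n ≠ 0 := by
  rw [aFn_eq_aP]
  refine RatFunc.algebraMap_ne_zero (fun hh => ?_)
  have := aP_eval0 n
  rw [hh] at this
  simp at this

lemma aFn_two_step (n : ℕ) :
    aFn (n + 4) = (1 - RatFunc.X) * aFn (n + 2) - RatFunc.X ^ 2 * aFn n := by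
  rcases Nat.even_or_odd n with ⟨k, rfl⟩ | ⟨k, rfl⟩
  · have h4 : (k + k + 4) % 2 = 0 := by omega
    have h3 : (k + k + 3) % 2 = 1 := by omega
    rw [show k + k + 4 = (k + k + 2) + 2 by ring, aFn]
    rw [show (k + k + 2) + 2 = k + k + 4 by ring, h4, if_neg (by omega)]
    rw [show k + k + 2 + 1 = (k + k + 1) + 2 by ring, aFn,
      show (k + k + 1) + 2 = k + k + 3 by ring, h3, if_pos rfl]
    rw [show k + k + 2 = (k + k) + 2 by ring, aFn, if_neg (by omega)]
    ring
  · have h4 : (2*k + 1 + 4) % 2 = 1 := by omega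
    have h3 : (2*k + 1 + 3) % 2 = 0 := by omega
    have h2 : (2*k + 1 + 2) % 2 = 1 := by omega
    rw [show 2*k + 1 + 4 = (2*k + 3) + 2 by ring, aFn,
      show (2*k + 3) + 2 = 2*k+1+4 by ring, h4, if_pos rfl]
    rw [show 2*k + 1 + 3 = (2*k+2) + 2 by ring, aFn,
      show (2*k+2) + 2 = 2*k+1+3 by ring, h3, if_neg (by omega)]
    rw [show 2*k + 1 + 2 = (2*k+1) + 2 by ring, aFn,
      show (2*k+1) + 2 = 2*k+1+2 by ring, h2, if_pos rfl]
    ring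

lemma aFn_even_id (k : ℕ) :
    aFn (2*k + 4) = aFn (2*k + 3) - RatFunc.X ^ 2 * aFn (2*k + 1) := by
  rw [show 2*k + 4 = (2*k + 2) + 2 by ring, aFn,
    show (2*k+2)+2 = 2*k+4 by ring, if_neg (by omega)]
  rw [show 2*k + 3 = (2*k + 1) + 2 by ring, aFn,
    show (2*k+1)+2 = 2*k+3 by ring, if_pos (by omega)]
  ring

lemma aFn_zero : aFn 0 = 1 := by simp [aFn]
lemma aFn_one : aFn 1 = 1 := by simp [aFn]
lemma aFn_two : aFn 2 = 1 := by rw [show 2 = 0+2 from rfl, aFn]; norm_num [aFn]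
lemma aFn_three : aFn 3 = 1 - RatFunc.X := by
  rw [show 3 = 1+2 from rfl, aFn]; norm_num [aFn_two, aFn_one]

/-- Solving one period of the recurrence: if the value just before the period is
`a_m a_{m+1} u`, then inside the period the values are given by the closed form times `u`. -/
lemma genSeries_period (m : ℕ) (hm : 2 ≤ m) (A : ℤ → RatFunc ℚ)
    (hrec : ∀ n : ℤ, -1 ≤ n →
      A n =
        if 2 * (n % (m : ℤ) + 1) = (m : ℤ) - 1 then A (n + 1)
        else if (n % (m : ℤ) + 1) = (m : ℤ) - 1 ∨ 2 * (n % (m : ℤ) + 1) = (m : ℤ) - 2 then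
          A (n + 1) * (1 - (if m = 2 then 0 else 1) * RatFunc.X)
        else if 2 * (n % (m : ℤ) + 1) = (m : ℤ) then
          A (n + 1) - (if m = 2 then 0 else 1) * RatFunc.X ^ 2 * A (n + 2)
        else
          (1 - RatFunc.X) * A (n + 1) - (if m = 2 then 0 else 1) * RatFunc.X ^ 2 * A (n + 2))
    (b : ℤ) (hb0 : 0 ≤ b) (hbm : (m : ℤ) ∣ b) (u : RatFunc ℚ)
    (hseed : A (b - 1) = aFn m * aFn (m + 1) * u) :
    ∀ j : ℕ, j ≤ m - 1 →
      A (b + j) =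
        (if m / 2 ≤ j then aFn (2 * m - 2 * j - 1) else aFn m * aFn (m - 2 * j - 1)) * u := by
  obtain ⟨k, hk⟩ := hbm
  obtain ⟨t, hpar⟩ : ∃ t, m = 2 * t + 1 ∨ m = 2 * t + 2 := ⟨(m - 1) / 2, by omega⟩
  have hmod : ∀ j : ℕ, j < m → (b + (j : ℤ)) % (m : ℤ) = j := by
    intro j hj
    rw [hk, add_comm, Int.add_mul_emod_self_left]
    exact Int.emod_eq_of_lt (by positivity) (by exact_mod_cast hj)
  have hmod' : (b - 1) % (m : ℤ) = (m : ℤ) - 1 := by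
    have h : b - 1 = ((m : ℤ) - 1) + (m : ℤ) * (k - 1) := by rw [hk]; ring
    rw [h, Int.add_mul_emod_self_left]
    exact Int.emod_eq_of_lt (by omega) (by omega)
  clear hk
  -- Phase 1 : downward chain from A (b+t) to A (b-1)
  have phase1 : ∀ i : ℕ, i ≤ t + 1 →
      A (b + (t : ℤ) - (i : ℤ)) = aFn (m - 2*t - 1 + 2*i) * A (b + (t : ℤ)) := by
    intro i
    induction i using Nat.strong_induction_on with
    | _ i ih =>
      match i with
      | 0 =>
        intro _
        have h0 : m - 2*t - 1 + 2*0 = 0 ∨ m - 2*t - 1 + 2*0 = 1 := by omega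
        rcases h0 with h0 | h0 <;> rw [h0] <;> simp [aFn_zero, aFn_one]
      | 1 =>
        intro _
        rcases hpar with hp | hp
        · -- m odd, so t ≥ 1
          have ht1 : 1 ≤ t := by omega
          rw [show b + (t : ℤ) - ((1:ℕ) : ℤ) = b + ((t-1 : ℕ) : ℤ) by omega,
            hrec _ (by omega), hmod (t-1) (by omega), if_pos (by omega),
            show b + ((t-1:ℕ) : ℤ) + 1 = b + (t : ℤ) by omega,
            show m - 2*t - 1 + 2*1 = 2 by omega, aFn_two, one_mul]
        · by_cases ht0 : t = 0
          · -- m = 2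
            subst ht0
            rw [show b + ((0:ℕ) : ℤ) - ((1:ℕ) : ℤ) = b - 1 by omega,
              hrec _ (by omega), hmod', if_neg (by omega), if_neg (by omega),
              if_neg (by omega), if_pos (show m = 2 by omega),
              show b - 1 + 1 = b + ((0:ℕ) : ℤ) by omega,
              show m - 2*0 - 1 + 2*1 = 3 by omega, aFn_three]
            ring
          · -- m even ≥ 4
            have ht1 : 1 ≤ t := by omega
            rw [show b + (t : ℤ) - ((1:ℕ) : ℤ) = b + ((t-1 : ℕ) : ℤ) by omega,
              hrec _ (by omega), hmod (t-1) (by omega), if_neg (by omega),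
              if_pos (by omega), if_neg (show ¬ m = 2 by omega),
              show b + ((t-1:ℕ) : ℤ) + 1 = b + (t : ℤ) by omega,
              show m - 2*t - 1 + 2*1 = 3 by omega, aFn_three]
            ring
      | (i+2) =>
        intro hi
        have hm3 : 3 ≤ m := by omega
        have key : A (b + (t : ℤ) - ((i+2 : ℕ) : ℤ)) =
            (1 - RatFunc.X) * A (b + (t : ℤ) - ((i+1 : ℕ) : ℤ))
              - RatFunc.X ^ 2 * A (b + (t : ℤ) - ((i : ℕ) : ℤ)) := by
          by_cases h : i + 2 ≤ t
          · rw [show b + (t : ℤ) - ((i+2:ℕ) : ℤ) = b + ((t-(i+2) : ℕ) : ℤ) by omega,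
              hrec _ (by omega), hmod (t-(i+2)) (by omega),
              if_neg (by omega), if_neg (by omega), if_neg (by omega),
              if_neg (show ¬ m = 2 by omega),
              show b + ((t-(i+2):ℕ) : ℤ) + 1 = b + (t : ℤ) - ((i+1:ℕ) : ℤ) by omega,
              show b + ((t-(i+2):ℕ) : ℤ) + 2 = b + (t : ℤ) - ((i:ℕ) : ℤ) by omega]
            ring
          · have h2 : i + 2 = t + 1 := by omega
            rw [show b + (t : ℤ) - ((i+2:ℕ) : ℤ) = b - 1 by omega,
              hrec _ (by omega), hmod', if_neg (by omega), if_neg (by omega),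
              if_neg (by omega), if_neg (show ¬ m = 2 by omega),
              show b - 1 + 1 = b + (t : ℤ) - ((i+1:ℕ) : ℤ) by omega,
              show b - 1 + 2 = b + (t : ℤ) - ((i:ℕ) : ℤ) by omega]
            ring
        rw [key, ih (i+1) (by omega) (by omega), ih i (by omega) (by omega),
          show m - 2*t - 1 + 2*(i+2) = (m - 2*t - 1 + 2*i) + 4 by omega, aFn_two_step]
        ring
  -- Phase 2 : downward chain from A (b+m-1)
  have phase2 : ∀ i : ℕ, i ≤ t →
      A (b + (m : ℤ) - 1 - (i : ℤ)) = aFn (2*i + 1) * A (b + (m : ℤ) - 1) := by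
    intro i
    induction i using Nat.strong_induction_on with
    | _ i ih =>
      match i with
      | 0 =>
        intro _
        rw [show b + (m : ℤ) - 1 - ((0:ℕ) : ℤ) = b + (m : ℤ) - 1 by omega, aFn_one, one_mul]
      | 1 =>
        intro hi
        have hm3 : 3 ≤ m := by omega
        rw [show b + (m : ℤ) - 1 - ((1:ℕ) : ℤ) = b + ((m-2 : ℕ) : ℤ) by omega,
          hrec _ (by omega), hmod (m-2) (by omega), if_neg (by omega), if_pos (by omega),
          if_neg (show ¬ m = 2 by omega),
          show b + ((m-2:ℕ) : ℤ) + 1 = b + (m : ℤ) - 1 by omega,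
          show 2*1 + 1 = 3 by norm_num, aFn_three]
        ring
      | (i+2) =>
        intro hi
        have hm3 : 3 ≤ m := by omega
        rw [show b + (m : ℤ) - 1 - ((i+2:ℕ) : ℤ) = b + ((m-3-i : ℕ) : ℤ) by omega,
          hrec _ (by omega), hmod (m-3-i) (by omega),
          if_neg (by omega), if_neg (by omega), if_neg (by omega),
          if_neg (show ¬ m = 2 by omega),
          show b + ((m-3-i:ℕ) : ℤ) + 1 = b + (m : ℤ) - 1 - ((i+1:ℕ) : ℤ) by omega,
          show b + ((m-3-i:ℕ) : ℤ) + 2 = b + (m : ℤ) - 1 - ((i:ℕ) : ℤ) by omega,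
          ih (i+1) (by omega) (by omega), ih i (by omega) (by omega),
          show 2*(i+2) + 1 = (2*i+1) + 4 by ring, aFn_two_step]
        ring
  -- A (b+t) = aFn m * A (b+m-1)
  have hAbt : A (b + (t : ℤ)) = aFn m * A (b + (m : ℤ) - 1) := by
    rcases hpar with hp | hp
    · have h := phase2 t le_rfl
      rw [show b + (m : ℤ) - 1 - (t : ℤ) = b + (t : ℤ) by omega,
        show 2*t + 1 = m by omega] at h
      exact h
    · by_cases ht0 : t = 0
      · -- m = 2
        have hmm : aFn m = 1 := by rw [show m = 2 by omega]; exact aFn_two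
        rw [show b + (t:ℤ) = b + ((0:ℕ):ℤ) by omega,
          hrec _ (by omega), hmod 0 (by omega),
          if_neg (by omega), if_pos (by omega), if_pos (show m = 2 by omega),
          show b + ((0:ℕ):ℤ) + 1 = b + (m:ℤ) - 1 by omega, hmm]
        ring
      · have ht1 : 1 ≤ t := by omega
        have hmm : aFn m = aFn (2*(t-1) + 3) - RatFunc.X ^ 2 * aFn (2*(t-1) + 1) := by
          rw [show m = 2*(t-1) + 4 by omega, aFn_even_id]
        rw [show b + (t:ℤ) = b + ((t:ℕ):ℤ) by norm_num,
          hrec _ (by omega), hmod t (by omega),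
          if_neg (by omega), if_neg (by omega), if_pos (by omega),
          if_neg (show ¬ m = 2 by omega),
          show b + ((t:ℕ):ℤ) + 1 = b + (m : ℤ) - 1 - ((t:ℕ) : ℤ) by omega,
          show b + ((t:ℕ):ℤ) + 2 = b + (m : ℤ) - 1 - ((t-1:ℕ) : ℤ) by omega,
          phase2 t le_rfl, phase2 (t-1) (by omega), hmm,
          show 2*t + 1 = 2*(t-1) + 3 by omega]
        ring
  -- pin down A (b+t) and A (b+m-1)
  have h1 := phase1 (t+1) le_rfl
  rw [show b + (t : ℤ) - ((t+1:ℕ) : ℤ) = b - 1 by omega,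
    show m - 2*t - 1 + 2*(t+1) = m + 1 by omega, hseed] at h1
  have hAt : A (b + (t : ℤ)) = aFn m * u := by
    refine mul_left_cancel₀ (aFn_ne_zero (m+1)) ?_
    rw [← h1]; ring
  have hAbm : A (b + (m : ℤ) - 1) = u := by
    refine mul_left_cancel₀ (aFn_ne_zero m) ?_
    rw [← hAbt, hAt]
  -- conclusion
  intro j hj
  by_cases hc : m / 2 ≤ j
  · rw [if_pos hc,
      show b + (j : ℤ) = b + (m : ℤ) - 1 - ((m-1-j : ℕ) : ℤ) by omega,
      phase2 (m-1-j) (by omega), hAbm,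
      show 2*(m-1-j) + 1 = 2*m - 2*j - 1 by omega]
  · rw [if_neg hc,
      show b + (j : ℤ) = b + (t : ℤ) - ((t-j : ℕ) : ℤ) by omega,
      phase1 (t-j) (by omega), hAt,
      show m - 2*t - 1 + 2*(t-j) = m - 2*j - 1 by omega]
    ring

/-- Closed form of the generating series `A_n^{1→m}(x)` of numerical multiplicities of level-`m`
Demazure flags in level-1 Demazure modules.  `A : ℤ → ℚ(x)` is characterized by `A₋₁ = 1`
together with the recurrence of Proposition `genserrec` (writing `n+1 = m n₁ + n₀`,
`0 < n₀ ≤ m`, so that `n₀ = n % m + 1`).  Then for `s ≥ 0` and `0 ≤ r ≤ m-1`: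
`A_{ms+r} = a_{2m-2r-1}/(a_m a_{m+1})^{s+1}` if `⌊m/2⌋ ≤ r ≤ m-1`, and
`A_{ms+r} = a_m a_{m-2r-1}/(a_m a_{m+1})^{s+1}` if `0 ≤ r ≤ ⌊m/2⌋ - 1`. -/
theorem genSeries_one_to_m_closed_form (m : ℕ) (hm : 2 ≤ m) (A : ℤ → RatFunc ℚ)
    (hinit : A (-1) = 1)
    (hrec : ∀ n : ℤ, -1 ≤ n →
      A n =
        if 2 * (n % (m : ℤ) + 1) = (m : ℤ) - 1 then A (n + 1)
        else if (n % (m : ℤ) + 1) = (m : ℤ) - 1 ∨ 2 * (n % (m : ℤ) + 1) = (m : ℤ) - 2 then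
          A (n + 1) * (1 - (if m = 2 then 0 else 1) * RatFunc.X)
        else if 2 * (n % (m : ℤ) + 1) = (m : ℤ) then
          A (n + 1) - (if m = 2 then 0 else 1) * RatFunc.X ^ 2 * A (n + 2)
        else
          (1 - RatFunc.X) * A (n + 1) - (if m = 2 then 0 else 1) * RatFunc.X ^ 2 * A (n + 2)) :
    ∀ s r : ℕ, r ≤ m - 1 →
      A ((m : ℤ) * s + r) =
        if m / 2 ≤ r then aFn (2 * m - 2 * r - 1) / (aFn m * aFn (m + 1)) ^ (s + 1)
        else aFn m * aFn (m - 2 * r - 1) / (aFn m * aFn (m + 1)) ^ (s + 1) := by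
  have hD : aFn m * aFn (m + 1) ≠ 0 := mul_ne_zero (aFn_ne_zero m) (aFn_ne_zero (m + 1))
  have seed : ∀ s : ℕ, A ((m : ℤ) * s - 1) =
      aFn m * aFn (m + 1) * ((aFn m * aFn (m + 1)) ^ (s + 1))⁻¹ := by
    intro s
    induction s with
    | zero =>
      rw [show ((m : ℤ) * ((0:ℕ) : ℤ) - 1) = -1 by push_cast; ring, hinit, pow_one,
        mul_inv_cancel₀ hD]
    | succ s ih =>
      have h := genSeries_period m hm A hrec ((m : ℤ) * s)
        (by positivity) (Dvd.intro _ rfl)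
        (((aFn m * aFn (m + 1)) ^ (s + 1))⁻¹) ih (m - 1) le_rfl
      rw [if_pos (by omega), show 2*m - 2*(m-1) - 1 = 1 by omega, aFn_one, one_mul] at h
      rw [show (m : ℤ) * ((s+1 : ℕ) : ℤ) - 1 = (m : ℤ) * s + ((m-1 : ℕ) : ℤ) by
          have : ((m-1:ℕ) : ℤ) = (m : ℤ) - 1 := by omega
          rw [this]; push_cast; ring, h, pow_succ]
      rw [mul_inv]
      have hA0 := aFn_ne_zero m
      have hA1 := aFn_ne_zero (m + 1)
      field_simp
      ring
  intro s r hr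
  have h := genSeries_period m hm A hrec ((m : ℤ) * s)
    (by positivity) (Dvd.intro _ rfl)
    (((aFn m * aFn (m + 1)) ^ (s + 1))⁻¹) (seed s) r hr
  rw [h]
  split_ifs <;> rw [div_eq_mul_inv]
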